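/- There exist no constant C>0 such that for all h1,h2,h3>0, the inequality 21h3² ≤ C·(h1² + h2² + h1h2 + √((h1⁴+h1²h2²)/3) + √((h1²h2²+h2⁴)/3)) holds. Consequently, for the tetrahedron T̃ (which satisfies the maximum angle condition but not the regular vertex property), the anisotropic interpolation estimate ‖u − I₁^{BDM}u‖ ≲ Σ_{|α|=1} h^α ‖D^α u‖ + h_T‖div u‖ fails for u=(x1x3,−x2x3,0) when h3 ≫ h1,h2. -/
import Mathlib

/-- There is no constant `C > 0` such that for all `h₁, h₂, h₃ > 0`,
`21h₃² ≤ C (h₁² + h₂² + h₁h₂ + √((h₁⁴+h₁²h₂²)/3) + √((h₁²h₂²+h₂⁴)/3))`.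
Consequently the anisotropic interpolation estimate
`‖u - I₁^BDM u‖ ≲ Σ_{|α|=1} h^α ‖D^α u‖ + h_T ‖div u‖` fails on the tetrahedron `T̃`
(which satisfies the maximum angle condition but not the regular vertex property)
for `u = (x₁x₃, -x₂x₃, 0)` when `h₃ ≫ h₁, h₂`. -/
theorem no_uniform_anisotropic_constant :
    ¬ ∃ C : ℝ, 0 < C ∧ ∀ h1 h2 h3 : ℝ, 0 < h1 → 0 < h2 → 0 < h3 →
      21 * h3 ^ 2 ≤
        C * (h1 ^ 2 + h2 ^ 2 + h1 * h2 +
          Real.sqrt ((h1 ^ 4 + h1 ^ 2 * h2 ^ 2) / 3) +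
          Real.sqrt ((h1 ^ 2 * h2 ^ 2 + h2 ^ 4) / 3)) := by
  rintro ⟨C, hC, h⟩
  have := h 1 1 (C + 1) one_pos one_pos (by linarith)
  have hs : Real.sqrt (((1:ℝ) ^ 4 + 1 ^ 2 * 1 ^ 2) / 3) ≤ 1 := by
    rw [show ((1:ℝ) ^ 4 + 1 ^ 2 * 1 ^ 2) / 3 = 2/3 by norm_num]
    calc Real.sqrt (2/3) ≤ Real.sqrt 1 := Real.sqrt_le_sqrt (by norm_num)
    _ = 1 := Real.sqrt_one
  have hs2 : Real.sqrt (((1:ℝ) ^ 2 * 1 ^ 2 + 1 ^ 4) / 3) ≤ 1 := by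
    rw [show ((1:ℝ) ^ 2 * 1 ^ 2 + 1 ^ 4) / 3 = 2/3 by norm_num]
    calc Real.sqrt (2/3) ≤ Real.sqrt 1 := Real.sqrt_le_sqrt (by norm_num)
    _ = 1 := Real.sqrt_one
  nlinarith [this, sq_nonneg C, sq_nonneg (C - 1)]
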